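/- arXiv:1101.5133 — 2 statements merged into one kernel-verified Lean document; each statement's English description precedes it below -/
import Mathlib

section
/- Let φ : ℝⁿ → ℝ be a smooth ℤⁿ-periodic function such that u(x) = ½|x|² + φ(x) has positive definite Hessian everywhere, and let ψ : ℝⁿ → ℝ be a smooth ℤⁿ-periodic function with ∫_{[0,1]ⁿ} Σ_{i,j,a,b} u^{ia} ψ_{ab} u^{bj} ψ_{ij} dx = 0, where ψ_{ab} denotes the entries of the Hessian of ψ. Then ψ is constant. -/
open MeasureTheory Matrix

/-- Partial derivative in the `i`-th coordinate direction. -/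
noncomputable def pd {n : ℕ} (i : Fin n) (f : (Fin n → ℝ) → ℝ) (x : Fin n → ℝ) : ℝ :=
  fderiv ℝ f x (Pi.single i 1)

/-- Hessian matrix `(u_{ij})` of `u` at `x`. -/
noncomputable def hess {n : ℕ} (u : (Fin n → ℝ) → ℝ) (x : Fin n → ℝ) :
    Matrix (Fin n) (Fin n) ℝ :=
  Matrix.of fun i j => pd i (pd j u) x

/-- `f : ℝⁿ → ℝ` is ℤⁿ-periodic. -/
def ZPer {n : ℕ} (f : (Fin n → ℝ) → ℝ) : Prop :=
  ∀ (x : Fin n → ℝ) (k : Fin n → ℤ), f (x + fun i => (k i : ℝ)) = f x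

/-- Abreu's operator `∑_{i,j} ∂²u^{ij}/∂x_i∂x_j`, where `(u^{ij})` is the inverse Hessian. -/
noncomputable def abreuOp {n : ℕ} (u : (Fin n → ℝ) → ℝ) (x : Fin n → ℝ) : ℝ :=
  ∑ i, ∑ j, pd i (pd j (fun z => (hess u z)⁻¹ i j)) x

section Aux

variable {n : ℕ}

lemma contDiff_pd (i : Fin n) {f : (Fin n → ℝ) → ℝ} (hf : ContDiff ℝ (⊤:ℕ∞) f) :
    ContDiff ℝ (⊤:ℕ∞) (pd i f) := by
  have h1 : ContDiff ℝ (⊤:ℕ∞) (fderiv ℝ f) := hf.fderiv_right (by norm_cast)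
  exact (ContinuousLinearMap.apply ℝ ℝ (Pi.single i 1)).contDiff.comp h1

lemma fderiv_translate (f : (Fin n → ℝ) → ℝ) (c x : Fin n → ℝ) (hf : DifferentiableAt ℝ f (x + c)) :
    fderiv ℝ (fun y => f (y + c)) x = fderiv ℝ f (x + c) := by
  have h : HasFDerivAt (fun y => f (y + c)) (fderiv ℝ f (x + c)) x := by
    have := hf.hasFDerivAt.comp x ((hasFDerivAt_id x).add_const c)
    simpa [Function.comp_def] using this
  exact h.fderiv

lemma ZPer.pd' {f : (Fin n → ℝ) → ℝ} (hper : ZPer f) (hf : Differentiable ℝ f) (i : Fin n) :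
    ZPer (pd i f) := by
  intro x k
  have hfun : (fun y => f (y + fun j => (k j : ℝ))) = f := funext fun y => hper y k
  show fderiv ℝ f (x + fun j => (k j:ℝ)) (Pi.single i 1) = fderiv ℝ f x (Pi.single i 1)
  rw [← fderiv_translate f _ x (hf _), hfun]

lemma pd_pd_eq {f : (Fin n → ℝ) → ℝ} (hf : ContDiff ℝ (⊤:ℕ∞) f) (i j : Fin n) (x : Fin n → ℝ) :
    pd i (pd j f) x = fderiv ℝ (fderiv ℝ f) x (Pi.single i 1) (Pi.single j 1) := by
  have hdf : DifferentiableAt ℝ (fderiv ℝ f) x :=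
    ((hf.fderiv_right (m := (⊤:ℕ∞)) (by norm_cast)).differentiable (by norm_cast)).differentiableAt
  show fderiv ℝ ((ContinuousLinearMap.apply ℝ ℝ (Pi.single j 1) :
      ((Fin n → ℝ) →L[ℝ] ℝ) →L[ℝ] ℝ) ∘ fderiv ℝ f) x (Pi.single i 1) = _
  rw [fderiv_comp x (ContinuousLinearMap.apply ℝ ℝ (Pi.single j 1)).differentiableAt hdf,
      ContinuousLinearMap.fderiv]
  rfl

lemma hess_symm {f : (Fin n → ℝ) → ℝ} (hf : ContDiff ℝ (⊤:ℕ∞) f) (x : Fin n → ℝ) :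
    (hess f x)ᵀ = hess f x := by
  ext i j
  show pd j (pd i f) x = pd i (pd j f) x
  rw [pd_pd_eq hf, pd_pd_eq hf]
  exact (hf.contDiffAt.isSymmSndFDerivAt (by simp; exact WithTop.coe_le_coe.mpr le_top)) _ _

lemma sum_sq_trace (M : Matrix (Fin n) (Fin n) ℝ) (hM : Mᵀ = M) :
    trace (M * M) = ∑ i, ∑ j, (M i j)^2 := by
  simp only [trace, diag, Matrix.mul_apply]
  refine Finset.sum_congr rfl fun i _ => Finset.sum_congr rfl fun j _ => ?_
  have h : M j i = M i j := by rw [← Matrix.transpose_apply M i j, hM]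
  rw [h, sq]

open scoped MatrixOrder in
lemma quad_key {B H : Matrix (Fin n) (Fin n) ℝ} (hB : B.PosDef) (hH : Hᵀ = H) :
    0 ≤ trace (B*H*B*H) ∧ (trace (B*H*B*H) = 0 → H = 0) := by
  classical
  obtain ⟨S, hSS, hSsymm, hdet⟩ : ∃ S : Matrix (Fin n) (Fin n) ℝ,
      S * S = B ∧ Sᵀ = S ∧ S.det ≠ 0 := by
    refine ⟨CFC.sqrt B, CFC.sqrt_mul_sqrt_self B hB.posSemidef.nonneg,
      (CFC.sqrt_nonneg B).posSemidef.isHermitian.eq, fun h => ?_⟩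
    have : B.det = 0 := by rw [← CFC.sqrt_mul_sqrt_self B hB.posSemidef.nonneg, Matrix.det_mul, h, mul_zero]
    exact (ne_of_gt hB.det_pos) this
  set M := S * H * S with hMdef
  have hMsymm : Mᵀ = M := by
    rw [hMdef, Matrix.transpose_mul, Matrix.transpose_mul, hSsymm, hH, Matrix.mul_assoc]
  have htr : trace (B*H*B*H) = trace (M * M) := by
    rw [← hSS]
    have h1 : S * S * H * (S * S) * H = S * (M * (S * H)) := by
      simp only [hMdef, Matrix.mul_assoc]
    rw [h1, Matrix.trace_mul_comm]
    congr 1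
    simp only [hMdef, Matrix.mul_assoc]
  have hsq := sum_sq_trace M hMsymm
  constructor
  · rw [htr, hsq]
    exact Finset.sum_nonneg fun i _ => Finset.sum_nonneg fun j _ => sq_nonneg _
  · intro h0
    rw [htr, hsq] at h0
    have hM0 : M = 0 := by
      ext i j
      have h1 := (Finset.sum_eq_zero_iff_of_nonneg
        (fun i _ => Finset.sum_nonneg fun j _ => sq_nonneg (M i j))).mp h0 i (Finset.mem_univ i)
      have h2 := (Finset.sum_eq_zero_iff_of_nonneg (fun j _ => sq_nonneg (M i j))).mp h1 j
        (Finset.mem_univ j)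
      exact pow_eq_zero_iff (n := 2) (by norm_num) |>.mp h2
    have hfin : H = S⁻¹ * M * S⁻¹ := by
      rw [hMdef, ← Matrix.mul_assoc, ← Matrix.mul_assoc,
        Matrix.nonsing_inv_mul _ (isUnit_iff_ne_zero.mpr hdet), Matrix.one_mul,
        Matrix.mul_assoc, Matrix.mul_nonsing_inv _ (isUnit_iff_ne_zero.mpr hdet), Matrix.mul_one]
    rw [hfin, hM0, Matrix.mul_zero, Matrix.zero_mul]

lemma sum_eq_trace (B H : Matrix (Fin n) (Fin n) ℝ) (hH : Hᵀ = H) :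
    ∑ i, ∑ j, ∑ a, ∑ b, B i a * H a b * B b j * H i j = trace (B*H*B*H) := by
  have hsymm : ∀ i j, H j i = H i j := fun i j => by rw [← Matrix.transpose_apply H i j, hH]
  have step1 : ∀ i j, ∑ a, ∑ b, B i a * H a b * B b j * H i j = (B*H*B) i j * H i j := by
    intro i j
    simp only [Matrix.mul_apply, Finset.sum_mul]
    rw [Finset.sum_comm]
  have step2 : trace (B*H*B*H) = ∑ i, ∑ j, (B*H*B) i j * H i j := by
    simp only [trace, diag]
    refine Finset.sum_congr rfl fun i _ => ?_
    rw [Matrix.mul_apply]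
    exact Finset.sum_congr rfl fun j _ => by rw [hsymm i j]
  rw [step2]
  exact Finset.sum_congr rfl fun i _ => Finset.sum_congr rfl fun j _ => step1 i j

lemma zero_on_Icc {g : (Fin n → ℝ) → ℝ} (hg : Continuous g) (hnn : ∀ x, 0 ≤ g x)
    (h0 : ∫ x in Set.Icc (0:Fin n → ℝ) 1, g x = 0) :
    ∀ x ∈ Set.Icc (0:Fin n → ℝ) 1, g x = 0 := by
  have hInt : IntegrableOn g (Set.Icc (0:Fin n → ℝ) 1) :=
    hg.continuousOn.integrableOn_compact isCompact_Icc
  have hae : g =ᵐ[volume.restrict (Set.Icc (0:Fin n → ℝ) 1)] 0 :=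
    (setIntegral_eq_zero_iff_of_nonneg_ae (ae_of_all _ hnn) hInt).mp h0
  set U : Set (Fin n → ℝ) := Set.pi Set.univ fun _ => Set.Ioo (0:ℝ) 1 with hUdef
  have hUopen : IsOpen U := isOpen_set_pi Set.finite_univ fun i _ => isOpen_Ioo
  have hUsub : U ⊆ Set.Icc (0:Fin n → ℝ) 1 := by
    rw [← Set.pi_univ_Icc]
    exact Set.pi_mono fun i _ => Set.Ioo_subset_Icc_self
  have hgU : ∀ x ∈ U, g x = 0 := by
    by_contra h
    push_neg at h
    obtain ⟨x₀, hx₀U, hx₀⟩ := h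
    set V := U ∩ {x | g x ≠ 0} with hVdef
    have hVopen : IsOpen V := hUopen.inter (isOpen_compl_singleton.preimage hg)
    have hVpos : 0 < volume V := hVopen.measure_pos volume ⟨x₀, hx₀U, hx₀⟩
    have hmeas : MeasurableSet {x : Fin n → ℝ | g x ≠ 0} :=
      (isOpen_compl_singleton.preimage hg).measurableSet
    have hzero : volume ({x : Fin n → ℝ | g x ≠ 0} ∩ Set.Icc 0 1) = 0 := by
      have := hae
      rw [Filter.EventuallyEq, ae_iff] at this
      simpa [Measure.restrict_apply hmeas] using this
    have hsub : V ⊆ {x : Fin n → ℝ | g x ≠ 0} ∩ Set.Icc 0 1 := fun x hx =>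
      Set.mem_inter hx.2 (hUsub hx.1)
    have : volume V = 0 := measure_mono_null hsub hzero
    exact absurd this (ne_of_gt hVpos)
  have hclU : Set.Icc (0:Fin n → ℝ) 1 ⊆ closure U := by
    rw [hUdef, closure_pi_set]
    intro x hx
    rw [← Set.pi_univ_Icc] at hx
    intro i hi
    have := hx i hi
    simpa [closure_Ioo (zero_ne_one' ℝ)] using this
  intro x hx
  have : Set.EqOn g (fun _ => 0) (closure U) :=
    Set.EqOn.closure (fun y hy => hgU y hy) hg continuous_const
  exact this (hclU hx)

lemma exists_rep (x : Fin n → ℝ) : ∃ (y : Fin n → ℝ) (k : Fin n → ℤ),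
    y ∈ Set.Icc (0:Fin n → ℝ) 1 ∧ x = y + fun i => (k i : ℝ) := by
  refine ⟨fun i => Int.fract (x i), fun i => ⌊x i⌋, ?_, ?_⟩
  · constructor
    · intro i; exact Int.fract_nonneg (x i)
    · intro i; exact le_of_lt (Int.fract_lt_one (x i))
  · funext i
    show x i = Int.fract (x i) + (⌊x i⌋ : ℝ)
    rw [Int.fract]; ring

lemma continuous_hess {u : (Fin n → ℝ) → ℝ} (hu : ContDiff ℝ (⊤:ℕ∞) u) :
    Continuous fun x => hess u x :=
  continuous_matrix fun i j => (contDiff_pd i (contDiff_pd j hu)).continuous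

lemma continuous_inv_hess {u : (Fin n → ℝ) → ℝ} (hu : ContDiff ℝ (⊤:ℕ∞) u)
    (hpos : ∀ x, (hess u x).PosDef) (i j : Fin n) :
    Continuous fun x => (hess u x)⁻¹ i j := by
  have hdet : ∀ x, (hess u x).det ≠ 0 := fun x => ne_of_gt (hpos x).det_pos
  have h1 : (fun x => (hess u x)⁻¹ i j)
      = fun x => ((hess u x).det)⁻¹ * (hess u x).adjugate i j := by
    funext x
    rw [Matrix.inv_def, Matrix.smul_apply, Ring.inverse_eq_inv', smul_eq_mul]
  rw [h1]
  exact (((continuous_hess hu).matrix_det).inv₀ hdet).mul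
    (((continuous_hess hu).matrix_adjugate).matrix_elem i j)

lemma basis_expand (v : Fin n → ℝ) : ∑ i, v i • (Pi.single i (1:ℝ) : Fin n → ℝ) = v := by
  have h : ∀ i, v i • (Pi.single i (1:ℝ) : Fin n → ℝ) = Pi.single i (v i) := fun i => by
    rw [← Pi.single_smul, smul_eq_mul, mul_one]
  simp only [h]
  exact Finset.univ_sum_single v

lemma fderiv_zero_of_pd_zero {f : (Fin n → ℝ) → ℝ} (hf : Differentiable ℝ f)
    (h : ∀ (i : Fin n) x, pd i f x = 0) (x : Fin n → ℝ) : fderiv ℝ f x = 0 := by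
  ext v
  have hv : v = ∑ i, v i • (Pi.single i (1:ℝ) : Fin n → ℝ) := (basis_expand v).symm
  rw [ContinuousLinearMap.zero_apply, hv, map_sum]
  refine Finset.sum_eq_zero fun i _ => ?_
  rw [_root_.map_smul]
  have := h i x
  rw [pd] at this
  rw [this, smul_zero]

lemma pd_zero_of_const {f : (Fin n → ℝ) → ℝ} (hf : ContDiff ℝ (⊤:ℕ∞) f) (hper : ZPer f)
    (j : Fin n) (hconst : ∀ x, pd j f x = pd j f 0) : pd j f 0 = 0 := by
  set c := pd j f 0 with hc
  set e : Fin n → ℝ := Pi.single j 1 with he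
  have hline : ∀ t : ℝ, HasDerivAt (fun s : ℝ => f (s • e)) c t := by
    intro t
    have h1 : HasDerivAt (fun s : ℝ => s • e) e t := by
      simpa using (hasDerivAt_id t).smul_const e
    have h2 := ((hf.differentiable (by norm_cast)) (t • e)).hasFDerivAt.comp_hasDerivAt t h1
    have h3 : fderiv ℝ f (t • e) e = c := hconst (t • e)
    rwa [h3] at h2
  have hG : ∀ t : ℝ, HasDerivAt (fun s : ℝ => f (s • e) - s * c) 0 t := by
    intro t
    simpa using (hline t).fun_sub ((hasDerivAt_id t).mul_const c)
  have hcst : f ((1:ℝ) • e) - 1 * c = f ((0:ℝ) • e) - 0 * c :=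
    is_const_of_deriv_eq_zero (fun t => (hG t).differentiableAt) (fun t => (hG t).deriv) 1 0
  have hper1 : f ((1:ℝ) • e) = f ((0:ℝ) • e) := by
    have hk : ((0:ℝ) • e) + (fun i => (((Pi.single j 1 : Fin n → ℤ) i : ℤ) : ℝ)) = (1:ℝ) • e := by
      funext i
      simp [he, Pi.single_apply, apply_ite]
    rw [← hk, hper]
  rw [hper1] at hcst
  linarith

end Aux

theorem kernel_of_linearization_is_constant {n : ℕ} (φ ψ : (Fin n → ℝ) → ℝ)
    (hφ : ContDiff ℝ (⊤ : ℕ∞) φ) (hφper : ZPer φ)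
    (hpos : ∀ x, (hess (fun y => (1 / 2 : ℝ) * ∑ i, y i ^ 2 + φ y) x).PosDef)
    (hψ : ContDiff ℝ (⊤ : ℕ∞) ψ) (hψper : ZPer ψ)
    (hint : ∫ x in Set.Icc (0 : Fin n → ℝ) 1,
      ∑ i, ∑ j, ∑ a, ∑ b,
        (hess (fun y => (1 / 2 : ℝ) * ∑ i, y i ^ 2 + φ y) x)⁻¹ i a *
          hess ψ x a b *
          (hess (fun y => (1 / 2 : ℝ) * ∑ i, y i ^ 2 + φ y) x)⁻¹ b j *
          hess ψ x i j = 0) :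
    ∃ c : ℝ, ∀ x, ψ x = c := by
  classical
  set u : (Fin n → ℝ) → ℝ := fun y => (1 / 2 : ℝ) * ∑ i, y i ^ 2 + φ y with hu_def
  have husmooth : ContDiff ℝ (⊤:ℕ∞) u := by
    refine ContDiff.add ?_ hφ
    exact contDiff_const.mul (ContDiff.sum fun i _ =>
      (ContinuousLinearMap.proj i : (Fin n → ℝ) →L[ℝ] ℝ).contDiff.pow 2)
  have hψdiff : Differentiable ℝ ψ := hψ.differentiable (by norm_cast)
  -- the integrand
  set g : (Fin n → ℝ) → ℝ := fun x => ∑ i, ∑ j, ∑ a, ∑ b,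
      (hess u x)⁻¹ i a * hess ψ x a b * (hess u x)⁻¹ b j * hess ψ x i j with hg_def
  have hBpos : ∀ x, ((hess u x)⁻¹).PosDef := fun x => (hpos x).inv
  have hHsymm : ∀ x, (hess ψ x)ᵀ = hess ψ x := hess_symm hψ
  have hgtrace : ∀ x, g x = trace ((hess u x)⁻¹ * hess ψ x * (hess u x)⁻¹ * hess ψ x) :=
    fun x => sum_eq_trace _ _ (hHsymm x)
  have hgnn : ∀ x, 0 ≤ g x := fun x => by
    rw [hgtrace x]; exact (quad_key (hBpos x) (hHsymm x)).1
  have hgcont : Continuous g := by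
    refine continuous_finset_sum _ fun i _ => continuous_finset_sum _ fun j _ =>
      continuous_finset_sum _ fun a _ => continuous_finset_sum _ fun b _ => ?_
    exact ((((continuous_inv_hess husmooth hpos i a).mul
      ((contDiff_pd a (contDiff_pd b hψ)).continuous)).mul
      (continuous_inv_hess husmooth hpos b j)).mul
      ((contDiff_pd i (contDiff_pd j hψ)).continuous))
  have hg0 : ∀ x ∈ Set.Icc (0:Fin n → ℝ) 1, g x = 0 := zero_on_Icc hgcont hgnn hint
  -- Hessian of ψ vanishes on the unit cube
  have hHIcc : ∀ x ∈ Set.Icc (0:Fin n → ℝ) 1, hess ψ x = 0 := fun x hx =>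
    (quad_key (hBpos x) (hHsymm x)).2 (by rw [← hgtrace x]; exact hg0 x hx)
  -- Hessian of ψ vanishes everywhere by periodicity
  have hH : ∀ x, hess ψ x = 0 := by
    intro x
    obtain ⟨y, k, hy, rfl⟩ := exists_rep x
    ext i j
    have hper2 : ZPer (pd i (pd j ψ)) :=
      (hψper.pd' hψdiff j).pd' ((contDiff_pd j hψ).differentiable (by norm_cast)) i
    show pd i (pd j ψ) (y + fun i => (k i : ℝ)) = 0
    rw [hper2 y k]
    have := hHIcc y hy
    have h0 : hess ψ y i j = 0 := by rw [this]; rfl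
    exact h0
  have hpd2 : ∀ (i j : Fin n) x, pd i (pd j ψ) x = 0 := fun i j x => by
    have := hH x
    have h0 : hess ψ x i j = 0 := by rw [this]; rfl
    exact h0
  -- each partial derivative of ψ is constant
  have hpdconst : ∀ (j : Fin n) x, pd j ψ x = pd j ψ 0 := fun j x =>
    is_const_of_fderiv_eq_zero ((contDiff_pd j hψ).differentiable (by norm_cast))
      (fderiv_zero_of_pd_zero ((contDiff_pd j hψ).differentiable (by norm_cast)) (fun i x => hpd2 i j x)) x 0
  -- each partial derivative of ψ vanishes
  have hpdzero : ∀ (j : Fin n) x, pd j ψ x = 0 := by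
    intro j x
    rw [hpdconst j x]
    exact pd_zero_of_const hψ hψper j (hpdconst j)
  refine ⟨ψ 0, fun x => ?_⟩
  exact is_const_of_fderiv_eq_zero hψdiff
    (fderiv_zero_of_pd_zero hψdiff (fun i x => hpdzero i x)) x 0
end

section
/- Let v : ℝⁿ → ℝ be a smooth function with positive definite Hessian of the form v(y) = ½|y|² + ψ(y) with ψ smooth and ℤⁿ-periodic, satisfying Σ_{i,j} v^{ij} L_{ij} = Ã where L = log det(Hess v) and (v^{ij}) is the inverse Hessian. Suppose the function f(y) = L(y) + ½|y|² + 2ψ(y) attains a global minimum at a point p. Then the trace of the inverse Hessian satisfies Σ_i v^{ii}(p) ≤ sup|Ã| + 2n. -/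
open MeasureTheory Matrix

/-! ### Auxiliary lemmas -/

section Aux

variable {n : ℕ}

lemma pd_contDiff {u : (Fin n → ℝ) → ℝ} (hu : ContDiff ℝ (⊤:ℕ∞) u) (i : Fin n) :
    ContDiff ℝ (⊤:ℕ∞) (pd i u) :=
  (hu.fderiv_right (by simp)).clm_apply contDiff_const

lemma my_diffAt {u : (Fin n → ℝ) → ℝ} (hu : ContDiff ℝ (⊤:ℕ∞) u) (x : Fin n → ℝ) :
    DifferentiableAt ℝ u x :=
  (hu.differentiable (by simp)) x

lemma pd_add {F G : (Fin n → ℝ) → ℝ} {x : Fin n → ℝ} (hF : DifferentiableAt ℝ F x)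
    (hG : DifferentiableAt ℝ G x) (i : Fin n) :
    pd i (fun y => F y + G y) x = pd i F x + pd i G x := by
  unfold pd
  rw [fderiv_fun_add hF hG]
  rfl

lemma pd_const_mul {F : (Fin n → ℝ) → ℝ} {x : Fin n → ℝ} (hF : DifferentiableAt ℝ F x)
    (c : ℝ) (i : Fin n) :
    pd i (fun y => c * F y) x = c * pd i F x := by
  unfold pd
  rw [fderiv_const_mul hF]
  rfl

/-- The coordinate projection as a continuous linear map. -/
noncomputable def pr (n : ℕ) (j : Fin n) : (Fin n → ℝ) →L[ℝ] ℝ :=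
  ContinuousLinearMap.proj j

lemma pd_proj (x : Fin n → ℝ) (i j : Fin n) :
    pd i (fun y => y j) x = if i = j then 1 else 0 := by
  have : (fun y : Fin n → ℝ => y j) = ⇑(pr n j) := rfl
  unfold pd
  rw [this, ContinuousLinearMap.fderiv]
  show (Pi.single i 1 : Fin n → ℝ) j = _
  rw [Pi.single_apply]
  simp [eq_comm]

/-- The quadratic function `½ |y|²`. -/
noncomputable def qfun (n : ℕ) : (Fin n → ℝ) → ℝ := fun y => (1/2 : ℝ) * ∑ i, y i ^ 2

lemma qfun_contDiff : ContDiff ℝ (⊤:ℕ∞) (qfun n) := by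
  unfold qfun
  exact contDiff_const.mul (ContDiff.sum fun i _ => ((pr n i).contDiff).pow 2)

lemma pd_qfun (x : Fin n → ℝ) (j : Fin n) : pd j (qfun n) x = x j := by
  have h1 : ∀ i : Fin n, HasFDerivAt (fun y : Fin n → ℝ => y i * y i)
      (x i • pr n i + x i • pr n i) x :=
    fun i => (pr n i).hasFDerivAt.mul (pr n i).hasFDerivAt
  have h2 : HasFDerivAt (qfun n)
      ((1/2 : ℝ) • ∑ i, (x i • pr n i + x i • pr n i)) x := by
    have hs : HasFDerivAt (fun y : Fin n → ℝ => ∑ i, y i * y i)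
        (∑ i, (x i • pr n i + x i • pr n i)) x := by
      have := HasFDerivAt.fun_sum (fun i (_ : i ∈ Finset.univ) => h1 i)
      simpa using this
    have := hs.const_mul (1/2 : ℝ)
    have he : qfun n = fun y : Fin n → ℝ => (1/2 : ℝ) * ∑ i, y i * y i := by
      funext y; unfold qfun; congr 1; exact Finset.sum_congr rfl fun i _ => sq (y i)
    rw [he]
    exact this
  unfold pd
  rw [h2.fderiv]
  simp only [ContinuousLinearMap.smul_apply, ContinuousLinearMap.sum_apply,
    ContinuousLinearMap.add_apply]
  have hpr : ∀ i : Fin n, (pr n i) (Pi.single j 1 : Fin n → ℝ) = if i = j then 1 else 0 := by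
    intro i
    show (Pi.single j 1 : Fin n → ℝ) i = _
    rw [Pi.single_apply]
  simp only [hpr, smul_eq_mul]
  rw [Finset.sum_congr rfl (fun i _ =>
    show x i * (if i = j then 1 else 0) + x i * (if i = j then 1 else 0)
        = (if i = j then 2 * x i else 0) from by split <;> ring)]
  rw [Finset.sum_ite_eq' Finset.univ j (fun i => 2 * x i)]
  simp

lemma pd_comp_add {u : (Fin n → ℝ) → ℝ} {x c : Fin n → ℝ}
    (hu : DifferentiableAt ℝ u (x + c)) (i : Fin n) :
    pd i (fun y => u (y + c)) x = pd i u (x + c) := by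
  have hγ : HasFDerivAt (fun y : Fin n → ℝ => y + c)
      (ContinuousLinearMap.id ℝ (Fin n → ℝ)) x := (hasFDerivAt_id x).add_const c
  have h := hu.hasFDerivAt.comp x hγ
  unfold pd
  rw [show (fun y => u (y + c)) = u ∘ (fun y : Fin n → ℝ => y + c) from rfl, h.fderiv]
  rfl

lemma ZPer.pd_per {u : (Fin n → ℝ) → ℝ} (hu : ContDiff ℝ (⊤:ℕ∞) u) (hp : ZPer u)
    (i : Fin n) : ZPer (pd i u) := by
  intro x k
  have hfun : (fun y => u (y + fun i => (k i : ℝ))) = u := funext fun y => hp y k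
  rw [← pd_comp_add (my_diffAt hu (x + fun i => (k i : ℝ))) i, hfun]

lemma det_hess_contDiff {u : (Fin n → ℝ) → ℝ} (hu : ContDiff ℝ (⊤:ℕ∞) u) :
    ContDiff ℝ (⊤:ℕ∞) (fun x => (hess u x).det) := by
  have : (fun x => (hess u x).det) =
      fun x => ∑ σ : Equiv.Perm (Fin n), (Equiv.Perm.sign σ : ℝ) * ∏ i, hess u x (σ i) i := by
    funext x; rw [Matrix.det_apply]; simp [Units.smul_def]
  rw [this]
  refine ContDiff.sum fun σ _ => ContDiff.mul contDiff_const ?_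
  exact contDiff_prod fun i _ => pd_contDiff (pd_contDiff hu i) (σ i)

lemma log_det_hess_contDiff {u : (Fin n → ℝ) → ℝ} (hu : ContDiff ℝ (⊤:ℕ∞) u)
    (hpos : ∀ y, (hess u y).PosDef) :
    ContDiff ℝ (⊤:ℕ∞) (fun x => Real.log (hess u x).det) := by
  rw [contDiff_iff_contDiffAt]
  intro x
  exact (Real.contDiffAt_log.2 (hpos x).det_pos.ne').comp x ((det_hess_contDiff hu).contDiffAt)

lemma second_deriv_nonneg_of_min {g : ℝ → ℝ} (hg : ContDiff ℝ (⊤:ℕ∞) g)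
    (hmin : ∀ t, g 0 ≤ g t) : 0 ≤ deriv (deriv g) 0 := by
  by_contra h
  push_neg at h
  have hg' : ContDiff ℝ (⊤:ℕ∞) (deriv g) := by
    have := contDiff_infty_iff_deriv.mp (by exact_mod_cast hg)
    exact_mod_cast this.2
  have hcont : Continuous (deriv (deriv g)) := hg'.continuous_deriv (by exact_mod_cast le_top)
  obtain ⟨ε, hε, hball⟩ := Metric.eventually_nhds_iff.mp
    (hcont.continuousAt.eventually_lt continuousAt_const h)
  have hconc : StrictConcaveOn ℝ (Metric.ball (0:ℝ) ε) g := by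
    apply strictConcaveOn_of_deriv2_neg (convex_ball 0 ε) (hg.continuous.continuousOn)
    intro x hx
    rw [Metric.isOpen_ball.interior_eq, Metric.mem_ball] at hx
    simpa [Function.iterate_succ, Function.iterate_zero] using hball hx
  have h1 : (ε/2 : ℝ) ∈ Metric.ball (0:ℝ) ε := by
    rw [Metric.mem_ball, Real.dist_eq]; rw [abs_lt]; constructor <;> linarith
  have h2 : (-(ε/2) : ℝ) ∈ Metric.ball (0:ℝ) ε := by
    rw [Metric.mem_ball, Real.dist_eq]; rw [abs_lt]; constructor <;> linarith
  have hne : (-(ε/2) : ℝ) ≠ (ε/2 : ℝ) := by intro hc; nlinarith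
  have hkey := hconc.2 h2 h1 hne (by norm_num : (0:ℝ) < 1/2) (by norm_num : (0:ℝ) < 1/2)
    (by norm_num)
  have hz : (1/2:ℝ) • (-(ε/2):ℝ) + (1/2:ℝ) • (ε/2:ℝ) = 0 := by
    simp only [smul_eq_mul]; ring
  rw [hz] at hkey
  have ha := hmin (-(ε/2)); have hb := hmin (ε/2)
  simp only [smul_eq_mul] at hkey
  linarith

lemma fderiv_apply_eq_sum (F : (Fin n → ℝ) → ℝ) (x w : Fin n → ℝ) :
    fderiv ℝ F x w = ∑ j, w j * pd j F x := by
  have hw : w = ∑ j, w j • (Pi.single j (1:ℝ) : Fin n → ℝ) := by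
    funext i
    rw [Finset.sum_apply]
    simp [Pi.single_apply]
  conv_lhs => rw [hw]
  rw [map_sum]
  exact Finset.sum_congr rfl fun j _ => by
    rw [(fderiv ℝ F x).map_smul, smul_eq_mul]; rfl

lemma line_contDiff {F : (Fin n → ℝ) → ℝ} (hF : ContDiff ℝ (⊤:ℕ∞) F)
    (p w : Fin n → ℝ) : ContDiff ℝ (⊤:ℕ∞) (fun s : ℝ => F (p + s • w)) :=
  hF.comp (contDiff_const.add (contDiff_id.smul contDiff_const))

lemma deriv_line {F : (Fin n → ℝ) → ℝ} (hF : ContDiff ℝ (⊤:ℕ∞) F)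
    (p w : Fin n → ℝ) (t : ℝ) :
    deriv (fun s : ℝ => F (p + s • w)) t = ∑ j, w j * pd j F (p + t • w) := by
  have hγ : HasDerivAt (fun s : ℝ => p + s • w) w t := by
    simpa using ((hasDerivAt_id t).smul_const w).const_add p
  have hf : HasFDerivAt F (fderiv ℝ F (p + t • w)) (p + t • w) :=
    (my_diffAt hF (p + t • w)).hasFDerivAt
  have h := (hf.comp_hasDerivAt t hγ).deriv
  rw [show (fun s : ℝ => F (p + s • w)) = F ∘ (fun s : ℝ => p + s • w) from rfl, h,
    fderiv_apply_eq_sum]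

lemma second_deriv_line {F : (Fin n → ℝ) → ℝ} (hF : ContDiff ℝ (⊤:ℕ∞) F)
    (p w : Fin n → ℝ) :
    deriv (deriv (fun s : ℝ => F (p + s • w))) 0
      = ∑ j, w j * ∑ i, w i * pd i (pd j F) p := by
  have h1 : deriv (fun s : ℝ => F (p + s • w)) = fun s => ∑ j, w j * pd j F (p + s • w) :=
    funext fun t => deriv_line hF p w t
  rw [h1]
  have h2 : ∀ j : Fin n, HasDerivAt (fun s : ℝ => pd j F (p + s • w))
      (∑ i, w i * pd i (pd j F) p) 0 := by
    intro j
    have hd := ((line_contDiff (pd_contDiff hF j) p w).differentiable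
      (by simp) 0).hasDerivAt
    rwa [deriv_line (pd_contDiff hF j) p w 0, zero_smul, add_zero] at hd
  have h3 : HasDerivAt (fun s : ℝ => ∑ j, w j * pd j F (p + s • w))
      (∑ j, w j * ∑ i, w i * pd i (pd j F) p) 0 :=
    HasDerivAt.fun_sum fun j _ => (h2 j).const_mul (w j)
  exact h3.deriv

end Aux

theorem trace_bound_at_min {n : ℕ} (ψ Atilde : (Fin n → ℝ) → ℝ)
    (hψ : ContDiff ℝ (⊤ : ℕ∞) ψ) (hper : ZPer ψ)
    (v : (Fin n → ℝ) → ℝ) (hv : ∀ y, v y = (1 / 2 : ℝ) * ∑ i, y i ^ 2 + ψ y)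
    (hpos : ∀ y, (hess v y).PosDef)
    (heq : ∀ y, ∑ i, ∑ j,
      (hess v y)⁻¹ i j * hess (fun z => Real.log (hess v z).det) y i j = Atilde y)
    (p : Fin n → ℝ)
    (hmin : ∀ y,
      Real.log (hess v p).det + (1 / 2 : ℝ) * ∑ i, p i ^ 2 + 2 * ψ p ≤
        Real.log (hess v y).det + (1 / 2 : ℝ) * ∑ i, y i ^ 2 + 2 * ψ y) :
    ∑ i, (hess v p)⁻¹ i i ≤ (⨆ y, |Atilde y|) + 2 * n := by
  classical
  -- basic setup
  set L : (Fin n → ℝ) → ℝ := fun z => Real.log (hess v z).det with hL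
  have hv' : v = fun y => qfun n y + ψ y := funext fun y => hv y
  have hv_smooth : ContDiff ℝ (⊤:ℕ∞) v := by
    rw [hv']; exact qfun_contDiff.add hψ
  have hL_smooth : ContDiff ℝ (⊤:ℕ∞) L := log_det_hess_contDiff hv_smooth hpos
  -- Hessian of v in terms of ψ
  have hpdv : ∀ (x : Fin n → ℝ) (j : Fin n), pd j v x = x j + pd j ψ x := by
    intro x j
    rw [hv']
    rw [pd_add (my_diffAt qfun_contDiff x) (my_diffAt hψ x), pd_qfun]
  have hessv_eq : ∀ (x : Fin n → ℝ) (i j : Fin n),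
      hess v x i j = (if i = j then 1 else 0) + pd i (pd j ψ) x := by
    intro x i j
    show pd i (pd j v) x = _
    have : pd j v = fun x => x j + pd j ψ x := funext fun x => hpdv x j
    rw [this, pd_add (differentiable_apply j).differentiableAt
      (my_diffAt (pd_contDiff hψ j) x), pd_proj]
  -- Periodicity of hess v, L, hess L, Atilde
  have hψij_per : ∀ i j : Fin n, ZPer (pd i (pd j ψ)) :=
    fun i j => ZPer.pd_per (pd_contDiff hψ j) (ZPer.pd_per hψ hper j) i
  have hessv_per : ∀ (x : Fin n → ℝ) (k : Fin n → ℤ),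
      hess v (x + fun i => (k i : ℝ)) = hess v x := by
    intro x k
    ext i j
    rw [hessv_eq, hessv_eq, hψij_per i j x k]
  have hLper : ZPer L := by
    intro x k
    simp only [hL]
    rw [hessv_per x k]
  have hLij_per : ∀ i j : Fin n, ZPer (pd i (pd j L)) :=
    fun i j => ZPer.pd_per (pd_contDiff hL_smooth j) (ZPer.pd_per hL_smooth hLper j) i
  have hAper : ZPer Atilde := by
    intro x k
    rw [← heq (x + fun i => (k i : ℝ)), ← heq x]
    refine Finset.sum_congr rfl fun i _ => Finset.sum_congr rfl fun j _ => ?_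
    rw [hessv_per x k]
    congr 1
    show pd i (pd j L) (x + fun i => (k i : ℝ)) = pd i (pd j L) x
    exact hLij_per i j x k
  -- Continuity & boundedness of |Atilde|
  have hAt_cont : Continuous Atilde := by
    have hAe : Atilde = fun y => ∑ i, ∑ j, (hess v y)⁻¹ i j * hess L y i j :=
      funext fun y => (heq y).symm
    rw [hAe]
    have hm : Continuous fun y => hess v y := by
      refine continuous_matrix fun i j => ?_
      exact (pd_contDiff (pd_contDiff hv_smooth j) i).continuous
    have hdet : Continuous fun y => (hess v y).det := hm.matrix_det
    have hinv : ∀ i j : Fin n, Continuous fun y => (hess v y)⁻¹ i j := by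
      intro i j
      have : (fun y => (hess v y)⁻¹ i j)
          = fun y => ((hess v y).det)⁻¹ * (hess v y).adjugate i j := by
        funext y
        rw [Matrix.inv_def, Matrix.smul_apply, Ring.inverse_eq_inv', smul_eq_mul]
      rw [this]
      exact ((hdet.inv₀ fun y => (hpos y).det_pos.ne').mul
        ((hm.matrix_adjugate).matrix_elem i j))
    refine continuous_finset_sum _ fun i _ => continuous_finset_sum _ fun j _ => ?_
    exact (hinv i j).mul (pd_contDiff (pd_contDiff hL_smooth j) i).continuous
  have hbdd : BddAbove (Set.range fun y => |Atilde y|) := by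
    have hK : IsCompact (Set.Icc (0 : Fin n → ℝ) 1) := isCompact_Icc
    refine BddAbove.mono ?_ ((hK.image hAt_cont.abs).bddAbove)
    rintro z ⟨y, rfl⟩
    refine ⟨fun i => Int.fract (y i), ?_, ?_⟩
    · constructor
      · intro i; exact Int.fract_nonneg _
      · intro i; exact (Int.fract_lt_one _).le
    · show |Atilde fun i => Int.fract (y i)| = |Atilde y|
      have : y = (fun i => Int.fract (y i)) + fun i => ((⌊y i⌋ : ℤ) : ℝ) := by
        funext i
        show y i = Int.fract (y i) + (⌊y i⌋ : ℝ)
        rw [Int.fract]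
        ring
      conv_rhs => rw [this]
      rw [hAper (fun i => Int.fract (y i)) (fun i => ⌊y i⌋)]
  -- Second-derivative test at the minimum
  set f : (Fin n → ℝ) → ℝ := fun y => L y + (qfun n y + 2 * ψ y) with hf
  have hf_smooth : ContDiff ℝ (⊤:ℕ∞) f :=
    hL_smooth.add (qfun_contDiff.add (contDiff_const.mul hψ))
  have hfmin : ∀ y, f p ≤ f y := by
    intro y
    have := hmin y
    simp only [hf, hL, qfun]
    linarith
  set B : Matrix (Fin n) (Fin n) ℝ := Matrix.of fun i j => pd i (pd j f) p with hB
  have hQ : ∀ w : Fin n → ℝ, 0 ≤ ∑ j, w j * ∑ i, w i * B i j := by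
    intro w
    have hg : ∀ t, (fun s : ℝ => f (p + s • w)) 0 ≤ (fun s : ℝ => f (p + s • w)) t := by
      intro t
      simp only [zero_smul, add_zero]
      exact hfmin _
    have := second_deriv_nonneg_of_min (line_contDiff hf_smooth p w) hg
    rwa [second_deriv_line hf_smooth p w] at this
  -- matrices
  set C : Matrix (Fin n) (Fin n) ℝ := hess v p with hC
  set A : Matrix (Fin n) (Fin n) ℝ := C⁻¹ with hA
  set M : Matrix (Fin n) (Fin n) ℝ := hess L p with hM
  have hCpos : C.PosDef := hpos p
  have hApos : A.PosDef := hCpos.inv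
  -- B = M + 2C - 1 entrywise
  have hψij : ∀ i j : Fin n, pd i (pd j ψ) p = C i j - (if i = j then 1 else 0) := by
    intro i j
    have := hessv_eq p i j
    show pd i (pd j ψ) p = hess v p i j - _
    linarith [this]
  have hBij : ∀ i j : Fin n, B i j = M i j + 2 * C i j - (if i = j then 1 else 0) := by
    intro i j
    show pd i (pd j f) p = _
    have hpdf : pd j f = fun x => pd j L x + (x j + 2 * pd j ψ x) := by
      funext x
      simp only [hf]
      rw [pd_add (my_diffAt hL_smooth x)
        (my_diffAt (qfun_contDiff.add (contDiff_const.mul hψ)) x),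
        pd_add (my_diffAt qfun_contDiff x) (my_diffAt (contDiff_const.mul hψ) x),
        pd_qfun, pd_const_mul (my_diffAt hψ x)]
    rw [hpdf]
    have hd1 : DifferentiableAt ℝ (pd j L) p := my_diffAt (pd_contDiff hL_smooth j) p
    have hd2 : DifferentiableAt ℝ (fun x : Fin n → ℝ => x j) p :=
      (differentiable_apply j).differentiableAt
    have hd3 : DifferentiableAt ℝ (fun x => 2 * pd j ψ x) p :=
      (my_diffAt (contDiff_const.mul (pd_contDiff hψ j)) p)
    rw [pd_add hd1 (hd2.fun_add hd3), pd_add hd2 hd3, pd_proj,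
      pd_const_mul (my_diffAt (pd_contDiff hψ j) p), hψij i j]
    show M i j + _ = _
    ring
  -- the key sums
  have hCsymm : ∀ i j : Fin n, C i j = C j i := by
    intro i j
    have := hCpos.1
    rw [Matrix.IsHermitian] at this
    conv_lhs => rw [← this]
    simp [Matrix.conjTranspose_apply]
  have hAC : A * C = 1 :=
    Matrix.nonsing_inv_mul C (isUnit_iff_ne_zero.mpr hCpos.det_pos.ne')
  have hT : ∑ i, ∑ j, A i j * C i j = (n : ℝ) := by
    have : ∀ i : Fin n, ∑ j, A i j * C i j = (1 : Matrix (Fin n) (Fin n) ℝ) i i := by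
      intro i
      rw [← hAC, Matrix.mul_apply]
      exact Finset.sum_congr rfl fun j _ => by rw [hCsymm]
    rw [Finset.sum_congr rfl fun i _ => this i]
    simp [Matrix.one_apply]
  have htr : ∑ i, ∑ j, A i j * (if i = j then 1 else 0) = ∑ i, A i i := by
    refine Finset.sum_congr rfl fun i _ => ?_
    simp [mul_ite, Finset.sum_ite_eq']
  -- S ≥ 0
  obtain ⟨D, hD⟩ : ∃ D : Matrix (Fin n) (Fin n) ℝ, A = Dᴴ * D := by
    open MatrixOrder Matrix.Norms.L2Operator in
    obtain ⟨B, hB⟩ := CStarAlgebra.nonneg_iff_eq_star_mul_self.mp hApos.posSemidef.nonneg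
    exact ⟨B, hB⟩
  have hAij : ∀ i j : Fin n, A i j = ∑ k, D k i * D k j := by
    intro i j
    rw [hD, Matrix.mul_apply]
    exact Finset.sum_congr rfl fun k _ => by
      rw [Matrix.conjTranspose_apply, star_trivial]
  have hS : 0 ≤ ∑ i, ∑ j, A i j * B i j := by
    have hre : ∑ i, ∑ j, A i j * B i j
        = ∑ k, ∑ j, (D k j) * ∑ i, (D k i) * B i j := by
      have e1 : ∑ i, ∑ j, A i j * B i j
          = ∑ i, ∑ j, ∑ k, D k i * D k j * B i j := by
        refine Finset.sum_congr rfl fun i _ => Finset.sum_congr rfl fun j _ => ?_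
        rw [hAij, Finset.sum_mul]
      rw [e1]
      rw [Finset.sum_comm]
      refine ((Finset.sum_congr rfl fun j _ => Finset.sum_comm).trans ?_)
      rw [Finset.sum_comm]
      refine Finset.sum_congr rfl fun k _ => Finset.sum_congr rfl fun j _ => ?_
      rw [Finset.mul_sum]
      exact Finset.sum_congr rfl fun i _ => by ring
    rw [hre]
    exact Finset.sum_nonneg fun k _ => hQ (fun i => D k i)
  -- put it together
  have hAt : Atilde p = (∑ i, ∑ j, A i j * B i j) - 2 * (n : ℝ) + ∑ i, A i i := by
    rw [← heq p]
    have : ∀ i j : Fin n, A i j * M i j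
        = A i j * B i j - 2 * (A i j * C i j) + A i j * (if i = j then 1 else 0) := by
      intro i j
      rw [hBij]
      ring
    calc ∑ i, ∑ j, A i j * M i j
        = ∑ i, ∑ j, (A i j * B i j - 2 * (A i j * C i j)
            + A i j * (if i = j then 1 else 0)) := by
          exact Finset.sum_congr rfl fun i _ => Finset.sum_congr rfl fun j _ => this i j
      _ = (∑ i, ∑ j, A i j * B i j) - 2 * (∑ i, ∑ j, A i j * C i j)
            + ∑ i, ∑ j, A i j * (if i = j then 1 else 0) := by
          simp [Finset.sum_add_distrib, Finset.sum_sub_distrib, Finset.mul_sum]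
      _ = _ := by rw [hT, htr]
  have hsup : Atilde p ≤ ⨆ y, |Atilde y| :=
    le_trans (le_abs_self _) (le_ciSup hbdd p)
  have hfinal : ∑ i, A i i ≤ Atilde p + 2 * (n : ℝ) := by linarith
  calc ∑ i, (hess v p)⁻¹ i i = ∑ i, A i i := rfl
    _ ≤ Atilde p + 2 * (n : ℝ) := hfinal
    _ ≤ (⨆ y, |Atilde y|) + 2 * n := by linarith
end
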